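/- Suppose (Ш, →, ↠, ↪) is a finite two-acyclic factorization system and Щ ⊆ Ш is a ⇝-upset. Then the restriction of (Ш, →, ↠, ↪) to Щ (restricting all three relations to Щ) is a two-acyclic factorization system, and the map (X,Y) ↦ (X ∩ Щ, Y ∩ Щ) is a surjective lattice homomorphism from Pairs(→) to the lattice of maximal orthogonal pairs of the restricted system. Moreover, every lattice quotient of Pairs(→) arises in this way for a unique ⇝-upset Щ. -/
import Mathlib


namespace SDL

variable {S : Type*} {L : Type*}

/-- `X^⊥ = {y | x ↛ y for all x ∈ X}` -/
def perpR (r : S → S → Prop) (X : Set S) : Set S := {y | ∀ x ∈ X, ¬ r x y}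

/-- `^⊥Y = {x | x ↛ y for all y ∈ Y}` -/
def perpL (r : S → S → Prop) (Y : Set S) : Set S := {x | ∀ y ∈ Y, ¬ r x y}

/-- `(X, Y)` is a maximal orthogonal pair for `r`. -/
def IsMOP (r : S → S → Prop) (X Y : Set S) : Prop := Y = perpR r X ∧ X = perpL r Y

/-- The set of maximal orthogonal pairs. -/
def Pairs (r : S → S → Prop) : Type _ := {p : Set S × Set S // IsMOP r p.1 p.2}

/-- `Pairs r` is ordered by containment in the first component. -/
instance (r : S → S → Prop) : PartialOrder (Pairs r) where
  le p q := p.val.1 ⊆ q.val.1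
  le_refl _ := Set.Subset.rfl
  le_trans _ _ _ h h' := Set.Subset.trans h h'
  le_antisymm p q h h' := by
    apply Subtype.ext
    have h1 : p.val.1 = q.val.1 := subset_antisymm h h'
    have h2 : p.val.2 = q.val.2 := by rw [p.prop.1, q.prop.1, h1]
    exact Prod.ext h1 h2

/-- `x ↠ y` iff for all `z`, `y → z` implies `x → z`. -/
def Onto (r : S → S → Prop) (x y : S) : Prop := ∀ z, r y z → r x z

/-- `x ↪ y` iff for all `z`, `z → x` implies `z → y`. -/
def Into (r : S → S → Prop) (x y : S) : Prop := ∀ z, r z x → r z y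

/-- `Mult ↠ ↪` relates `x` to `z` iff `x ↠ y ↪ z` for some `y`. -/
def Mult (ont inj : S → S → Prop) (x z : S) : Prop := ∃ y, ont x y ∧ inj y z

/-- `(S, r, ont, inj)` is a factorization system. -/
structure IsFactSystem (r ont inj : S → S → Prop) : Prop where
  refl : ∀ x, r x x
  onto_iff : ∀ x y, ont x y ↔ Onto r x y
  into_iff : ∀ x y, inj x y ↔ Into r x y
  mult_iff : ∀ x z, r x z ↔ Mult ont inj x z

/-- A two-acyclic factorization system. -/
structure IsTwoAcyclicFS (r ont inj : S → S → Prop) extends IsFactSystem r ont inj : Prop where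
  onto_antisymm : ∀ x y, ont x y → ont y x → x = y
  into_antisymm : ∀ x y, inj x y → inj y x → x = y
  brick : ∀ x y, ont x y → inj y x → x = y

/-- `T(x) = {x' | x ↠ x'}`. -/
def Tset (ont : S → S → Prop) (x : S) : Set S := {x' | ont x x'}

/-- `F(x) = {x' | x' ↪ x}`. -/
def Fset (inj : S → S → Prop) (x : S) : Set S := {x' | inj x' x}

/-- Restriction of a relation to a subset. -/
def restrictRel (r : S → S → Prop) (D : Set S) : D → D → Prop := fun a b => r a b

/-- A subset is closed if it equals its closure `^⊥(X^⊥)`. -/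
def IsClosedSet (r : S → S → Prop) (X : Set S) : Prop := perpL r (perpR r X) = X

/-- The lattice of closed sets, ordered by containment. -/
abbrev Closeds (r : S → S → Prop) : Type _ := {X : Set S // IsClosedSet r X}

/-- `Del(X, c) = X \ {x ∈ X : x ↠ c}`. -/
def Del (ont : S → S → Prop) (X : Set S) (c : S) : Set S := X \ {x | ont x c}

/-- `Cov(X)`: those `c ∈ X` with `Del(X,c)` closed and the closure of `Del(X,c) ∪ {c}` equal
to `X`. -/
def CovS (r ont : S → S → Prop) (X : Set S) : Set S :=
  {c | c ∈ X ∧ IsClosedSet r (Del ont X c) ∧ perpL r (perpR r (Del ont X c ∪ {c})) = X}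

/-- Direct forcing: `x ⇝ y` iff `x` is `↠`-minimal in `F(y)` or `↪`-maximal in `T(y)`. -/
def Forces (ont inj : S → S → Prop) (x y : S) : Prop :=
  (inj x y ∧ ∀ x', inj x' y → ont x x' → x' = x) ∨
  (ont y x ∧ ∀ x', ont y x' → inj x' x → x' = x)

/-- `down X` for a partial order given as a relation (`r x y` meaning `x ≥ y`). -/
def dnRel (r : S → S → Prop) (X : Set S) : Set S := {y | ∃ x ∈ X, r x y}

/-- `up X` for a partial order given as a relation (`r x y` meaning `x ≥ y`). -/
def upRel (r : S → S → Prop) (X : Set S) : Set S := {y | ∃ x ∈ X, r y x}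

section OrderNotions

variable [PartialOrder L]

/-- Completely join-irreducible: there is `j⁎` such that `x < j ↔ x ≤ j⁎`. -/
def CJIrr (j : L) : Prop := ∃ j', ∀ x : L, x < j ↔ x ≤ j'

/-- Completely meet-irreducible: there is `j^*` such that `x > m ↔ x ≥ m^*`. -/
def CMIrr (m : L) : Prop := ∃ m', ∀ x : L, m < x ↔ m' ≤ x

/-- `k = κ(j)`: `k` is the greatest element of `{y | j ⊓ y = j⁎}`. -/
def IsKappa (j k : L) : Prop :=
  ∃ j', (∀ x : L, x < j ↔ x ≤ j') ∧ IsGreatest {y : L | IsGLB ({j, y} : Set L) j'} k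

/-- `k = κᵈ(m)`: `k` is the least element of `{x | m ⊔ x = m^*}`. -/
def IsKappad (m k : L) : Prop :=
  ∃ m', (∀ x : L, m < x ↔ m' ≤ x) ∧ IsLeast {x : L | IsLUB ({m, x} : Set L) m'} k

/-- `L` is a κ-lattice: complete, meet and join generated by irreducibles, with inverse
bijections `κ` and `κᵈ` between the completely join- and meet-irreducibles. -/
def IsKappaLattice (L : Type*) [PartialOrder L] : Prop :=
  (∀ s : Set L, ∃ a, IsLUB s a) ∧
  (∀ s : Set L, ∃ a, IsGLB s a) ∧
  (∀ x : L, IsLUB {j : L | CJIrr j ∧ j ≤ x} x) ∧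
  (∀ x : L, IsGLB {m : L | CMIrr m ∧ x ≤ m} x) ∧
  (∀ j : L, CJIrr j → ∃ k, IsKappa j k ∧ CMIrr k ∧ IsKappad k j) ∧
  (∀ m : L, CMIrr m → ∃ k, IsKappad m k ∧ CJIrr k ∧ IsKappa k m)

/-- Well separated: `z₁ ≰ z₂` implies some completely join-irreducible `j` has `j ≤ z₁` and
`κ(j) ≥ z₂`. -/
def WellSeparated (L : Type*) [PartialOrder L] : Prop :=
  ∀ z₁ z₂ : L, ¬ z₁ ≤ z₂ → ∃ j k : L, CJIrr j ∧ IsKappa j k ∧ j ≤ z₁ ∧ z₂ ≤ k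

/-- The set of completely join-irreducible elements, as a type. -/
abbrev JIrrC (L : Type*) [PartialOrder L] : Type _ := {j : L // CJIrr j}

/-- `i →_L j` iff `i ≰ κ(j)`. -/
def toL (i j : JIrrC L) : Prop := ∃ k : L, IsKappa (j : L) k ∧ ¬ (i : L) ≤ k

/-- `i ↠_L j` iff `i ≥ j` in `L`. -/
def ontoL (i j : JIrrC L) : Prop := (j : L) ≤ (i : L)

/-- `i ↪_L j` iff `κ(i) ≥ κ(j)` in `L`. -/
def intoL (i j : JIrrC L) : Prop :=
  ∃ ki kj : L, IsKappa (i : L) ki ∧ IsKappa (j : L) kj ∧ kj ≤ ki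

/-- A poset is a semidistributive lattice (order-theoretically): binary joins and meets exist,
and both semidistributive laws hold. -/
def IsSDLattice (L : Type*) [PartialOrder L] : Prop :=
  (∀ x y : L, ∃ s, IsLUB ({x, y} : Set L) s) ∧
  (∀ x y : L, ∃ s, IsGLB ({x, y} : Set L) s) ∧
  (∀ x y z sxy sxz myz : L, IsLUB ({x, y} : Set L) sxy → IsLUB ({x, z} : Set L) sxz →
    sxy = sxz → IsGLB ({y, z} : Set L) myz → IsLUB ({x, myz} : Set L) sxy) ∧
  (∀ x y z mxy mxz syz : L, IsGLB ({x, y} : Set L) mxy → IsGLB ({x, z} : Set L) mxz →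
    mxy = mxz → IsLUB ({y, z} : Set L) syz → IsGLB ({x, syz} : Set L) mxy)

/-- `s` is the canonical join representation of `x`. -/
def IsCanonicalJoinRep (s : Set L) (x : L) : Prop :=
  IsLUB s x ∧ (∀ s' : Set L, IsLUB s' x → ∀ a ∈ s, ∃ b ∈ s', a ≤ b) ∧
  IsAntichain (· ≤ ·) s

end OrderNotions

/-- Join semidistributivity. -/
def JoinSD (L : Type*) [Lattice L] : Prop :=
  ∀ x y z : L, x ⊔ y = x ⊔ z → x ⊔ (y ⊓ z) = x ⊔ y

/-- Meet semidistributivity. -/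
def MeetSD (L : Type*) [Lattice L] : Prop :=
  ∀ x y z : L, x ⊓ y = x ⊓ z → x ⊓ (y ⊔ z) = x ⊓ y

/-- Complete join semidistributivity. -/
def CompletelyJoinSD (L : Type*) [CompleteLattice L] : Prop :=
  ∀ (X : Set L) (y z : L), X.Nonempty → (∀ x ∈ X, x ⊔ y = z) → sInf X ⊔ y = z

/-- Complete meet semidistributivity. -/
def CompletelyMeetSD (L : Type*) [CompleteLattice L] : Prop :=
  ∀ (X : Set L) (y z : L), X.Nonempty → (∀ x ∈ X, x ⊓ y = z) → sSup X ⊓ y = z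

end SDL
namespace SDL

section AuxDev

variable {S : Type*}

/-! ### Generic perp / closure lemmas -/

theorem perpR_antitone' (t : S → S → Prop) {X X' : Set S} (hXX : X ⊆ X') :
    perpR t X' ⊆ perpR t X := fun y hy x hx => hy x (hXX hx)

theorem perpL_antitone' (t : S → S → Prop) {Y Y' : Set S} (hYY : Y ⊆ Y') :
    perpL t Y' ⊆ perpL t Y := fun x hx y hy => hx y (hYY hy)

theorem subset_perpL_perpR (t : S → S → Prop) (X : Set S) : X ⊆ perpL t (perpR t X) :=
  fun x hx y hy => hy x hx

theorem subset_perpR_perpL (t : S → S → Prop) (Y : Set S) : Y ⊆ perpR t (perpL t Y) :=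
  fun y hy x hx => hx y hy

theorem perpR_perpL_perpR (t : S → S → Prop) (X : Set S) :
    perpR t (perpL t (perpR t X)) = perpR t X :=
  subset_antisymm (perpR_antitone' t (subset_perpL_perpR t X)) (subset_perpR_perpL t _)

theorem perpL_perpR_perpL (t : S → S → Prop) (Y : Set S) :
    perpL t (perpR t (perpL t Y)) = perpL t Y :=
  subset_antisymm (perpL_antitone' t (subset_perpR_perpL t Y)) (subset_perpL_perpR t _)

theorem perpR_union' (t : S → S → Prop) (X X' : Set S) :
    perpR t (X ∪ X') = perpR t X ∩ perpR t X' := by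
  ext y
  constructor
  · intro hy
    exact ⟨fun x hx => hy x (Or.inl hx), fun x hx => hy x (Or.inr hx)⟩
  · rintro ⟨h1, h2⟩ x (hx | hx)
    exacts [h1 x hx, h2 x hx]

theorem perpL_union' (t : S → S → Prop) (Y Y' : Set S) :
    perpL t (Y ∪ Y') = perpL t Y ∩ perpL t Y' := by
  ext x
  constructor
  · intro hx
    exact ⟨fun y hy => hx y (Or.inl hy), fun y hy => hx y (Or.inr hy)⟩
  · rintro ⟨h1, h2⟩ y (hy | hy)
    exacts [h1 y hy, h2 y hy]

/-! ### Basic lemmas about `Pairs` -/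

theorem pairs_le_iff {t : S → S → Prop} (p q : Pairs t) : p ≤ q ↔ p.val.1 ⊆ q.val.1 := Iff.rfl

theorem pairs_ext {t : S → S → Prop} {p q : Pairs t} (h1 : p.val.1 = q.val.1) : p = q :=
  Subtype.ext (Prod.ext h1 (by rw [p.prop.1, q.prop.1, h1]))

theorem pairs_ext2 {t : S → S → Prop} {p q : Pairs t} (h2 : p.val.2 = q.val.2) : p = q :=
  pairs_ext (by rw [p.prop.2, q.prop.2, h2])

theorem pairs_le_iff2 {t : S → S → Prop} (p q : Pairs t) : p ≤ q ↔ q.val.2 ⊆ p.val.2 := by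
  constructor
  · intro hle
    rw [p.prop.1, q.prop.1]
    exact perpR_antitone' t ((pairs_le_iff p q).mp hle)
  · intro hle
    rw [pairs_le_iff, p.prop.2, q.prop.2]
    exact perpL_antitone' t hle

/-! ### Binary meets and joins in `Pairs` -/

def glbP {t : S → S → Prop} (p q : Pairs t) : Pairs t :=
  ⟨(p.val.1 ∩ q.val.1, perpR t (p.val.1 ∩ q.val.1)), by
    have hX : p.val.1 ∩ q.val.1 = perpL t (p.val.2 ∪ q.val.2) := by
      rw [perpL_union', ← p.prop.2, ← q.prop.2]
    exact ⟨rfl, by rw [hX, perpL_perpR_perpL]⟩⟩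

def lubP {t : S → S → Prop} (p q : Pairs t) : Pairs t :=
  ⟨(perpL t (p.val.2 ∩ q.val.2), p.val.2 ∩ q.val.2), by
    have hY : p.val.2 ∩ q.val.2 = perpR t (p.val.1 ∪ q.val.1) := by
      rw [perpR_union', ← p.prop.1, ← q.prop.1]
    exact ⟨by rw [hY, perpR_perpL_perpR], rfl⟩⟩

theorem glbP_le_left {t : S → S → Prop} (p q : Pairs t) : glbP p q ≤ p :=
  (pairs_le_iff _ _).mpr Set.inter_subset_left

theorem glbP_le_right {t : S → S → Prop} (p q : Pairs t) : glbP p q ≤ q :=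
  (pairs_le_iff _ _).mpr Set.inter_subset_right

theorem le_glbP {t : S → S → Prop} {w p q : Pairs t} (h1 : w ≤ p) (h2 : w ≤ q) :
    w ≤ glbP p q :=
  (pairs_le_iff _ _).mpr
    (Set.subset_inter ((pairs_le_iff _ _).mp h1) ((pairs_le_iff _ _).mp h2))

theorem le_lubP_left {t : S → S → Prop} (p q : Pairs t) : p ≤ lubP p q :=
  (pairs_le_iff2 _ _).mpr Set.inter_subset_left

theorem le_lubP_right {t : S → S → Prop} (p q : Pairs t) : q ≤ lubP p q :=
  (pairs_le_iff2 _ _).mpr Set.inter_subset_right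

theorem lubP_le {t : S → S → Prop} {w p q : Pairs t} (h1 : p ≤ w) (h2 : q ≤ w) :
    lubP p q ≤ w :=
  (pairs_le_iff2 _ _).mpr
    (Set.subset_inter ((pairs_le_iff2 _ _).mp h1) ((pairs_le_iff2 _ _).mp h2))

theorem isGLB_glbP {t : S → S → Prop} (p q : Pairs t) : IsGLB {p, q} (glbP p q) := by
  constructor
  · rintro x (rfl | rfl)
    exacts [glbP_le_left _ _, glbP_le_right _ _]
  · intro b hb
    exact le_glbP (hb (Set.mem_insert _ _)) (hb (Set.mem_insert_of_mem _ rfl))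

theorem isLUB_lubP {t : S → S → Prop} (p q : Pairs t) : IsLUB {p, q} (lubP p q) := by
  constructor
  · rintro x (rfl | rfl)
    exacts [le_lubP_left _ _, le_lubP_right _ _]
  · intro b hb
    exact lubP_le (hb (Set.mem_insert _ _)) (hb (Set.mem_insert_of_mem _ rfl))

theorem isGLB_iff_glbP {t : S → S → Prop} {p q s : Pairs t} :
    IsGLB {p, q} s ↔ s = glbP p q := by
  constructor
  · intro hs
    have h1 := isGLB_glbP p q
    exact le_antisymm (h1.2 hs.1) (hs.2 h1.1)
  · rintro rfl
    exact isGLB_glbP p q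

theorem isLUB_iff_lubP {t : S → S → Prop} {p q s : Pairs t} :
    IsLUB {p, q} s ↔ s = lubP p q := by
  constructor
  · intro hs
    have h1 := isLUB_lubP p q
    exact le_antisymm (hs.2 h1.1) (h1.2 hs.1)
  · rintro rfl
    exact isLUB_lubP p q

theorem glbP_eq_left {t : S → S → Prop} {p q : Pairs t} (hpq : p ≤ q) : glbP p q = p :=
  pairs_ext (Set.inter_eq_left.mpr ((pairs_le_iff p q).mp hpq))

theorem lubP_eq_left {t : S → S → Prop} {p q : Pairs t} (hqp : q ≤ p) : lubP p q = p :=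
  pairs_ext2 (Set.inter_eq_left.mpr ((pairs_le_iff2 q p).mp hqp))

theorem lubP_eq_right {t : S → S → Prop} {p q : Pairs t} (hpq : p ≤ q) : lubP p q = q :=
  pairs_ext2 (Set.inter_eq_right.mpr ((pairs_le_iff2 p q).mp hpq))

end AuxDev

end SDL
namespace SDL

section AuxDev2

variable {S : Type*} {r ont inj : S → S → Prop}

/-! ### Basic lemmas about `Onto` and `Into` -/

theorem onto_refl' (r : S → S → Prop) (x : S) : Onto r x x := fun _ hz => hz

theorem into_refl' (r : S → S → Prop) (x : S) : Into r x x := fun _ hz => hz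

theorem onto_trans' {r : S → S → Prop} {x y z : S} (h1 : Onto r x y) (h2 : Onto r y z) :
    Onto r x z := fun u hu => h1 u (h2 u hu)

theorem into_trans' {r : S → S → Prop} {x y z : S} (h1 : Into r x y) (h2 : Into r y z) :
    Into r x z := fun u hu => h2 u (h1 u hu)

theorem r_of_onto (h : IsTwoAcyclicFS r ont inj) {x y : S} (hxy : Onto r x y) : r x y :=
  hxy y (h.refl y)

theorem r_of_into (h : IsTwoAcyclicFS r ont inj) {x y : S} (hxy : Into r x y) : r x y :=
  hxy x (h.refl x)

theorem r_iff_factor (h : IsTwoAcyclicFS r ont inj) (x z : S) :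
    r x z ↔ ∃ y, Onto r x y ∧ Into r y z := by
  rw [h.mult_iff]
  constructor
  · rintro ⟨y, h1, h2⟩
    exact ⟨y, (h.onto_iff _ _).mp h1, (h.into_iff _ _).mp h2⟩
  · rintro ⟨y, h1, h2⟩
    exact ⟨y, (h.onto_iff _ _).mpr h1, (h.into_iff _ _).mpr h2⟩

theorem onto_antisymm' (h : IsTwoAcyclicFS r ont inj) {x y : S}
    (h1 : Onto r x y) (h2 : Onto r y x) : x = y :=
  h.onto_antisymm x y ((h.onto_iff _ _).mpr h1) ((h.onto_iff _ _).mpr h2)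

theorem into_antisymm' (h : IsTwoAcyclicFS r ont inj) {x y : S}
    (h1 : Into r x y) (h2 : Into r y x) : x = y :=
  h.into_antisymm x y ((h.into_iff _ _).mpr h1) ((h.into_iff _ _).mpr h2)

theorem brick' (h : IsTwoAcyclicFS r ont inj) {x y : S}
    (h1 : Onto r x y) (h2 : Into r y x) : x = y :=
  h.brick x y ((h.onto_iff _ _).mpr h1) ((h.into_iff _ _).mpr h2)

/-! ### Existence of minimal elements in finite sets -/

theorem exists_min {α : Type*} [Finite α] (q : α → α → Prop)
    (hq : ∀ a b c, q a b → q b c → q a c) (ha : ∀ a b, q a b → q b a → a = b) :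
    ∀ A : Set α, A.Nonempty → ∃ m ∈ A, ∀ a ∈ A, q m a → a = m := by
  have key : ∀ n : ℕ, ∀ A : Set α, A.ncard = n → A.Nonempty →
      ∃ m ∈ A, ∀ a ∈ A, q m a → a = m := by
    intro n
    induction n using Nat.strong_induction_on with
    | _ n ih =>
      rintro A hcard ⟨a, haA⟩
      by_cases hmin : ∀ b ∈ A, q a b → b = a
      · exact ⟨a, haA, hmin⟩
      · push_neg at hmin
        obtain ⟨b, hbA, hqb, hne⟩ := hmin
        have hb' : b ∈ {c ∈ A | q a c ∧ c ≠ a} := ⟨hbA, hqb, hne⟩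
        have hssub : {c ∈ A | q a c ∧ c ≠ a} ⊂ A := by
          constructor
          · exact fun c hc => hc.1
          · intro hAA
            exact (hAA haA).2.2 rfl
        have hlt : ({c ∈ A | q a c ∧ c ≠ a}).ncard < n := by
          rw [← hcard]
          exact Set.ncard_lt_ncard hssub (Set.toFinite A)
        obtain ⟨m, hmA, hmmin⟩ := ih _ hlt _ rfl ⟨b, hb'⟩
        refine ⟨m, hmA.1, fun c hcA hqmc => ?_⟩
        by_cases hca : c = a
        · subst hca
          exact absurd (ha _ _ hmA.2.1 hqmc).symm hmA.2.2
        · exact hmmin c ⟨hcA, hq a m c hmA.2.1 hqmc, hca⟩ hqmc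
  exact fun A hA => key A.ncard A rfl hA

/-! ### Factorization through the upset -/

theorem K1 [Finite S] (h : IsTwoAcyclicFS r ont inj) {U : Set S}
    (hU : ∀ x y, Forces ont inj x y → y ∈ U → x ∈ U) {y z : S}
    (hy : y ∈ U) (hyz : r y z) : ∃ w, w ∈ U ∧ Onto r y w ∧ Into r w z := by
  obtain ⟨w0, hw01, hw02⟩ := (r_iff_factor h y z).mp hyz
  obtain ⟨w, hwA, hwmin⟩ := exists_min (fun a b => Into r b a)
    (fun a b c h1 h2 => into_trans' h2 h1) (fun a b h1 h2 => into_antisymm' h h2 h1)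
    {w | Onto r y w ∧ Into r w z} ⟨w0, hw01, hw02⟩
  refine ⟨w, hU w y ?_ hy, hwA.1, hwA.2⟩
  right
  refine ⟨(h.onto_iff _ _).mpr hwA.1, fun x' hx'1 hx'2 => ?_⟩
  exact hwmin x' ⟨(h.onto_iff _ _).mp hx'1, into_trans' ((h.into_iff _ _).mp hx'2) hwA.2⟩
    ((h.into_iff _ _).mp hx'2)

theorem K2 [Finite S] (h : IsTwoAcyclicFS r ont inj) {U : Set S}
    (hU : ∀ x y, Forces ont inj x y → y ∈ U → x ∈ U) {x z : S}
    (hx : x ∈ U) (hzx : r z x) : ∃ w, w ∈ U ∧ Onto r z w ∧ Into r w x := by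
  obtain ⟨w0, hw01, hw02⟩ := (r_iff_factor h z x).mp hzx
  obtain ⟨w, hwA, hwmin⟩ := exists_min (fun a b => Onto r a b)
    (fun a b c h1 h2 => onto_trans' h1 h2) (fun a b h1 h2 => onto_antisymm' h h1 h2)
    {w | Onto r z w ∧ Into r w x} ⟨w0, hw01, hw02⟩
  refine ⟨w, hU w x ?_ hx, hwA.1, hwA.2⟩
  left
  refine ⟨(h.into_iff _ _).mpr hwA.2, fun x' hx'1 hx'2 => ?_⟩
  exact hwmin x' ⟨onto_trans' hwA.1 ((h.onto_iff _ _).mp hx'2), (h.into_iff _ _).mp hx'1⟩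
    ((h.onto_iff _ _).mp hx'2)

/-! ### Closed sets -/

theorem mem_of_onto {r : S → S → Prop} {X Y : Set S} (hX : X = perpL r Y) {x y : S}
    (hx : x ∈ X) (hxy : Onto r x y) : y ∈ X := by
  rw [hX] at hx ⊢
  intro v hv hyv
  exact hx v hv (hxy v hyv)

theorem mem_of_into {r : S → S → Prop} {Y X : Set S} (hY : Y = perpR r X) {x y : S}
    (hy : y ∈ Y) (hxy : Into r x y) : x ∈ Y := by
  rw [hY] at hy ⊢
  intro v hv hvx
  exact hy v hv (hxy v hvx)

theorem T_closed (r : S → S → Prop) (x : S) :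
    perpL r (perpR r {y | Onto r x y}) = {y | Onto r x y} := by
  apply subset_antisymm _ (subset_perpL_perpR r _)
  intro z hz
  show Onto r x z
  intro u hzu
  by_contra hxu
  exact hz u (fun v hv hvu => hxu (hv u hvu)) hzu

theorem F_coclosed (r : S → S → Prop) (x : S) :
    perpR r (perpL r {v | Into r v x}) = {v | Into r v x} := by
  apply subset_antisymm _ (subset_perpR_perpL r _)
  intro z hz
  show Into r z x
  intro u huz
  by_contra hux
  exact hz u (fun v hv huv => hux (hv u huv)) huz

theorem mem_perpR_D (h : IsTwoAcyclicFS r ont inj) (x : S) :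
    x ∈ perpR r {y | Onto r x y ∧ y ≠ x} := by
  rintro v ⟨hov, hne⟩ hrvx
  obtain ⟨t, hvt, htx⟩ := (r_iff_factor h v x).mp hrvx
  obtain rfl : x = t := brick' h (onto_trans' hov hvt) htx
  exact hne (onto_antisymm' h hov hvt).symm

theorem mem_perpL_Fs (h : IsTwoAcyclicFS r ont inj) (x : S) :
    x ∈ perpL r {v | Into r v x ∧ v ≠ x} := by
  rintro v ⟨hiv, hne⟩ hrxv
  obtain ⟨t, hxt, htv⟩ := (r_iff_factor h x v).mp hrxv
  obtain rfl : x = t := brick' h hxt (into_trans' htv hiv)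
  exact hne (into_antisymm' h hiv htv)

theorem Fs_subset_perpR_T (h : IsTwoAcyclicFS r ont inj) (x : S) :
    {v | Into r v x ∧ v ≠ x} ⊆ perpR r {y | Onto r x y} := by
  rintro v ⟨hiv, hne⟩ w how hrwv
  obtain ⟨t, hwt, htv⟩ := (r_iff_factor h w v).mp hrwv
  obtain rfl : x = t := brick' h (onto_trans' how hwt) (into_trans' htv hiv)
  exact mem_perpL_Fs h x v ⟨hiv, hne⟩ (r_of_into h htv)

theorem D_subset_perpL_F (h : IsTwoAcyclicFS r ont inj) (x : S) :
    {y | Onto r x y ∧ y ≠ x} ⊆ perpL r {v | Into r v x} := by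
  rintro z ⟨hoz, hne⟩ v hiv hrzv
  obtain ⟨t, hzt, htv⟩ := (r_iff_factor h z v).mp hrzv
  obtain rfl : x = t := brick' h (onto_trans' hoz hzt) (into_trans' htv hiv)
  exact hne (onto_antisymm' h hoz hzt).symm

theorem D_closed (h : IsTwoAcyclicFS r ont inj) (x : S) :
    perpL r (perpR r {y | Onto r x y ∧ y ≠ x}) = {y | Onto r x y ∧ y ≠ x} := by
  apply subset_antisymm _ (subset_perpL_perpR r _)
  intro z hz
  have hzT : z ∈ {y | Onto r x y} := by
    rw [← T_closed r x]
    exact perpL_antitone' r (perpR_antitone' r (fun y hy => hy.1)) hz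
  refine ⟨hzT, fun hzx => ?_⟩
  subst hzx
  exact hz z (mem_perpR_D h z) (h.refl z)

theorem Fs_coclosed (h : IsTwoAcyclicFS r ont inj) (x : S) :
    perpR r (perpL r {v | Into r v x ∧ v ≠ x}) = {v | Into r v x ∧ v ≠ x} := by
  apply subset_antisymm _ (subset_perpR_perpL r _)
  intro z hz
  have hzF : z ∈ {v | Into r v x} := by
    rw [← F_coclosed r x]
    exact perpR_antitone' r (perpL_antitone' r (fun v hv => hv.1)) hz
  refine ⟨hzF, fun hzx => ?_⟩
  subst hzx
  exact hz z (mem_perpL_Fs h z) (h.refl z)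

/-! ### Join- and meet-irreducible pairs -/

def jP (r : S → S → Prop) (x : S) : Pairs r :=
  ⟨({y | Onto r x y}, perpR r {y | Onto r x y}), rfl, (T_closed r x).symm⟩

def mPr (r : S → S → Prop) (x : S) : Pairs r :=
  ⟨(perpL r {v | Into r v x}, {v | Into r v x}), (F_coclosed r x).symm, rfl⟩

def jsP (h : IsTwoAcyclicFS r ont inj) (x : S) : Pairs r :=
  ⟨({y | Onto r x y ∧ y ≠ x}, perpR r {y | Onto r x y ∧ y ≠ x}), rfl, (D_closed h x).symm⟩

def msP (h : IsTwoAcyclicFS r ont inj) (x : S) : Pairs r :=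
  ⟨(perpL r {v | Into r v x ∧ v ≠ x}, {v | Into r v x ∧ v ≠ x}), (Fs_coclosed h x).symm, rfl⟩

theorem jP_le_iff {x : S} {p : Pairs r} : jP r x ≤ p ↔ x ∈ p.val.1 := by
  constructor
  · intro hle
    exact hle (onto_refl' r x)
  · intro hx y hy
    exact mem_of_onto p.prop.2 hx hy

theorem le_mP_iff {x : S} {p : Pairs r} : p ≤ mPr r x ↔ x ∈ p.val.2 := by
  rw [pairs_le_iff2]
  constructor
  · intro hle
    exact hle (into_refl' r x)
  · intro hx v hv
    exact mem_of_into p.prop.1 hx hv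

theorem jsP_le_jP (h : IsTwoAcyclicFS r ont inj) (x : S) : jsP h x ≤ jP r x := by
  rw [pairs_le_iff]
  exact fun y hy => hy.1

theorem lubP_mP_jsP (h : IsTwoAcyclicFS r ont inj) (x : S) :
    lubP (mPr r x) (jsP h x) = mPr r x :=
  lubP_eq_left (le_mP_iff.mpr (mem_perpR_D h x))

theorem lubP_mP_jP (h : IsTwoAcyclicFS r ont inj) (x : S) :
    lubP (mPr r x) (jP r x) = msP h x := by
  apply pairs_ext2
  show {v | Into r v x} ∩ perpR r {y | Onto r x y} = {v | Into r v x ∧ v ≠ x}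
  ext v
  constructor
  · rintro ⟨h1, h2⟩
    refine ⟨h1, fun hvx => ?_⟩
    subst hvx
    exact h2 v (onto_refl' r v) (h.refl v)
  · intro hv
    exact ⟨hv.1, Fs_subset_perpR_T h x hv⟩

theorem glbP_jP_msP (h : IsTwoAcyclicFS r ont inj) (x : S) :
    glbP (jP r x) (msP h x) = jP r x := by
  apply glbP_eq_left
  rw [pairs_le_iff]
  intro y hy v hv hrv
  exact Fs_subset_perpR_T h x hv y hy hrv

theorem glbP_jP_mP (h : IsTwoAcyclicFS r ont inj) (x : S) :
    glbP (jP r x) (mPr r x) = jsP h x := by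
  apply pairs_ext
  show {y | Onto r x y} ∩ perpL r {v | Into r v x} = {y | Onto r x y ∧ y ≠ x}
  ext z
  constructor
  · rintro ⟨h1, h2⟩
    refine ⟨h1, fun hzx => ?_⟩
    subst hzx
    exact h2 z (into_refl' r z) (h.refl z)
  · intro hz
    exact ⟨hz.1, D_subset_perpL_F h x hz⟩

end AuxDev2

end SDL
namespace SDL

section AuxDev3

variable {S : Type*} {r ont inj : S → S → Prop} {K : Type*} [Lattice K]

theorem g_lubP (g : Pairs r → K)
    (hlub : ∀ p q s : Pairs r, IsLUB {p, q} s → g s = g p ⊔ g q)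
    (p q : Pairs r) : g (lubP p q) = g p ⊔ g q :=
  hlub p q _ (isLUB_lubP p q)

theorem g_glbP (g : Pairs r → K)
    (hglb : ∀ p q s : Pairs r, IsGLB {p, q} s → g s = g p ⊓ g q)
    (p q : Pairs r) : g (glbP p q) = g p ⊓ g q :=
  hglb p q _ (isGLB_glbP p q)

theorem j_to_m (h : IsTwoAcyclicFS r ont inj) (g : Pairs r → K)
    (hlub : ∀ p q s : Pairs r, IsLUB {p, q} s → g s = g p ⊔ g q)
    {x : S} (hc : g (jP r x) = g (jsP h x)) : g (mPr r x) = g (msP h x) := calc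
  g (mPr r x) = g (lubP (mPr r x) (jsP h x)) := by rw [lubP_mP_jsP h x]
  _ = g (mPr r x) ⊔ g (jsP h x) := g_lubP g hlub _ _
  _ = g (mPr r x) ⊔ g (jP r x) := by rw [hc]
  _ = g (lubP (mPr r x) (jP r x)) := (g_lubP g hlub _ _).symm
  _ = g (msP h x) := by rw [lubP_mP_jP h x]

theorem m_to_j (h : IsTwoAcyclicFS r ont inj) (g : Pairs r → K)
    (hglb : ∀ p q s : Pairs r, IsGLB {p, q} s → g s = g p ⊓ g q)
    {x : S} (hc : g (mPr r x) = g (msP h x)) : g (jP r x) = g (jsP h x) := calc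
  g (jP r x) = g (glbP (jP r x) (msP h x)) := by rw [glbP_jP_msP h x]
  _ = g (jP r x) ⊓ g (msP h x) := g_glbP g hglb _ _
  _ = g (jP r x) ⊓ g (mPr r x) := by rw [hc]
  _ = g (glbP (jP r x) (mPr r x)) := (g_glbP g hglb _ _).symm
  _ = g (jsP h x) := by rw [glbP_jP_mP h x]

theorem forces_case1 (h : IsTwoAcyclicFS r ont inj) (g : Pairs r → K)
    (hlub : ∀ p q s : Pairs r, IsLUB {p, q} s → g s = g p ⊔ g q)
    (hglb : ∀ p q s : Pairs r, IsGLB {p, q} s → g s = g p ⊓ g q)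
    {x y : S} (hxy : Into r x y) (hmin : ∀ x', Into r x' y → Onto r x x' → x' = x)
    (hc : g (jP r x) = g (jsP h x)) : g (jP r y) = g (jsP h y) := by
  have e1 : glbP (jP r y) (lubP (jsP h y) (jP r x)) = jP r y := by
    apply glbP_eq_left
    rw [jP_le_iff]
    rintro u ⟨hu1, hu2⟩ hyu
    obtain ⟨w, hyw, hwu⟩ := (r_iff_factor h y u).mp hyu
    by_cases hwy : w = y
    · subst hwy
      exact hu2 x (onto_refl' r x) (r_of_into h (into_trans' hxy hwu))
    · exact hu1 w ⟨hyw, hwy⟩ (r_of_into h hwu)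
  have e2 : glbP (jP r y) (lubP (jsP h y) (jsP h x)) = jsP h y := by
    apply pairs_ext
    ext z
    constructor
    · rintro ⟨hz1, hz2⟩
      refine ⟨hz1, fun hzy => ?_⟩
      subst hzy
      refine hz2 z ⟨mem_perpR_D h z, ?_⟩ (h.refl z)
      rintro v ⟨hov, hvne⟩ hrvz
      obtain ⟨t, hvt, htz⟩ := (r_iff_factor h v z).mp hrvz
      have ht := hmin t htz (onto_trans' hov hvt)
      rw [ht] at hvt
      exact hvne (onto_antisymm' h hov hvt).symm
    · intro hz
      exact ⟨hz.1, fun u hu hzu => hu.1 z hz hzu⟩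
  calc g (jP r y) = g (glbP (jP r y) (lubP (jsP h y) (jP r x))) := by rw [e1]
    _ = g (jP r y) ⊓ (g (jsP h y) ⊔ g (jP r x)) := by
        rw [g_glbP g hglb, g_lubP g hlub]
    _ = g (jP r y) ⊓ (g (jsP h y) ⊔ g (jsP h x)) := by rw [hc]
    _ = g (glbP (jP r y) (lubP (jsP h y) (jsP h x))) := by
        rw [g_glbP g hglb, g_lubP g hlub]
    _ = g (jsP h y) := by rw [e2]

theorem forces_case2 (h : IsTwoAcyclicFS r ont inj) (g : Pairs r → K)
    (hlub : ∀ p q s : Pairs r, IsLUB {p, q} s → g s = g p ⊔ g q)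
    (hglb : ∀ p q s : Pairs r, IsGLB {p, q} s → g s = g p ⊓ g q)
    {x y : S} (hyx : Onto r y x) (hmax : ∀ x', Onto r y x' → Into r x' x → x' = x)
    (hc : g (mPr r x) = g (msP h x)) : g (mPr r y) = g (msP h y) := by
  have e1 : lubP (mPr r y) (glbP (msP h y) (mPr r x)) = mPr r y := by
    apply lubP_eq_left
    rw [le_mP_iff]
    rintro u ⟨hu1, hu2⟩ hruy
    obtain ⟨w, huw, hwy⟩ := (r_iff_factor h u y).mp hruy
    by_cases hwy' : w = y
    · subst hwy'
      exact hu2 x (into_refl' r x) (r_of_onto h (onto_trans' huw hyx))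
    · exact hu1 w ⟨hwy, hwy'⟩ (r_of_onto h huw)
  have e2 : lubP (mPr r y) (glbP (msP h y) (msP h x)) = msP h y := by
    apply pairs_ext2
    ext v
    constructor
    · rintro ⟨hv1, hv2⟩
      refine ⟨hv1, fun hvy => ?_⟩
      subst hvy
      refine hv2 v ⟨mem_perpL_Fs h v, ?_⟩ (h.refl v)
      rintro v' ⟨hiv', hv'ne⟩ hrvv'
      obtain ⟨t, hvt, htv'⟩ := (r_iff_factor h v v').mp hrvv'
      have ht := hmax t hvt (into_trans' htv' hiv')
      rw [ht] at htv'
      exact hv'ne (into_antisymm' h hiv' htv')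
    · intro hv
      exact ⟨hv.1, fun u hu hruv => hu.1 v hv hruv⟩
  calc g (mPr r y) = g (lubP (mPr r y) (glbP (msP h y) (mPr r x))) := by rw [e1]
    _ = g (mPr r y) ⊔ (g (msP h y) ⊓ g (mPr r x)) := by
        rw [g_lubP g hlub, g_glbP g hglb]
    _ = g (mPr r y) ⊔ (g (msP h y) ⊓ g (msP h x)) := by rw [hc]
    _ = g (lubP (mPr r y) (glbP (msP h y) (msP h x))) := by
        rw [g_lubP g hlub, g_glbP g hglb]
    _ = g (msP h y) := by rw [e2]

theorem forces_contract (h : IsTwoAcyclicFS r ont inj) (g : Pairs r → K)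
    (hlub : ∀ p q s : Pairs r, IsLUB {p, q} s → g s = g p ⊔ g q)
    (hglb : ∀ p q s : Pairs r, IsGLB {p, q} s → g s = g p ⊓ g q)
    {x y : S} (hf : Forces ont inj x y)
    (hc : g (jP r x) = g (jsP h x)) : g (jP r y) = g (jsP h y) := by
  rcases hf with ⟨h1, h2⟩ | ⟨h1, h2⟩
  · exact forces_case1 h g hlub hglb ((h.into_iff _ _).mp h1)
      (fun x' hx'1 hx'2 => h2 x' ((h.into_iff _ _).mpr hx'1) ((h.onto_iff _ _).mpr hx'2)) hc
  · exact m_to_j h g hglb (forces_case2 h g hlub hglb ((h.onto_iff _ _).mp h1)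
      (fun x' hx'1 hx'2 => h2 x' ((h.onto_iff _ _).mpr hx'1) ((h.into_iff _ _).mpr hx'2))
      (j_to_m h g hlub hc))

/-- The set of uncontracted elements. -/
def Vset (h : IsTwoAcyclicFS r ont inj) (g : Pairs r → K) : Set S :=
  {x | g (jP r x) ≠ g (jsP h x)}

theorem Vset_upset (h : IsTwoAcyclicFS r ont inj) (g : Pairs r → K)
    (hlub : ∀ p q s : Pairs r, IsLUB {p, q} s → g s = g p ⊔ g q)
    (hglb : ∀ p q s : Pairs r, IsGLB {p, q} s → g s = g p ⊓ g q) :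
    ∀ x y, Forces ont inj x y → y ∈ Vset h g → x ∈ Vset h g := by
  intro x y hf hy hcx
  exact hy (forces_contract h g hlub hglb hf hcx)

theorem contracted_of_collapse (h : IsTwoAcyclicFS r ont inj) (g : Pairs r → K)
    (hlub : ∀ p q s : Pairs r, IsLUB {p, q} s → g s = g p ⊔ g q)
    (hglb : ∀ p q s : Pairs r, IsGLB {p, q} s → g s = g p ⊓ g q)
    {p q : Pairs r} (hpq : p ≤ q) (hgpq : g p = g q)
    {x : S} (hxq : x ∈ q.val.1) (hxp : x ∉ p.val.1) :
    g (jP r x) = g (jsP h x) := by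
  have h3 : g (glbP (jP r x) p) = g (jP r x) := by
    rw [g_glbP g hglb, hgpq, ← g_glbP g hglb, glbP_eq_left (jP_le_iff.mpr hxq)]
  have hle : glbP (jP r x) p ≤ jsP h x := by
    rw [pairs_le_iff]
    rintro z ⟨hz1, hz2⟩
    exact ⟨hz1, fun hzx => hxp (hzx ▸ hz2)⟩
  have key : g (jsP h x) = g (jP r x) := calc
    g (jsP h x) = g (lubP (jsP h x) (glbP (jP r x) p)) := by rw [lubP_eq_left hle]
    _ = g (jsP h x) ⊔ g (glbP (jP r x) p) := g_lubP g hlub _ _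
    _ = g (jsP h x) ⊔ g (jP r x) := by rw [h3]
    _ = g (lubP (jsP h x) (jP r x)) := (g_lubP g hlub _ _).symm
    _ = g (jP r x) := by rw [lubP_eq_right (jsP_le_jP h x)]
  exact key.symm

theorem collapse_of_contracted [Finite S] (h : IsTwoAcyclicFS r ont inj) (g : Pairs r → K)
    (hlub : ∀ p q s : Pairs r, IsLUB {p, q} s → g s = g p ⊔ g q)
    (hglb : ∀ p q s : Pairs r, IsGLB {p, q} s → g s = g p ⊓ g q) :
    ∀ (n : ℕ) (p q : Pairs r), (q.val.1 \ p.val.1).ncard = n → p ≤ q →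
    (∀ x ∈ q.val.1 \ p.val.1, g (jP r x) = g (jsP h x)) → g p = g q := by
  intro n
  induction n using Nat.strong_induction_on with
  | _ n ih =>
    intro p q hn hpq hcon
    rcases Set.eq_empty_or_nonempty (q.val.1 \ p.val.1) with hemp | hne
    · have hqp : q.val.1 ⊆ p.val.1 := fun x hx => by
        by_contra hxp
        exact (Set.eq_empty_iff_forall_notMem.mp hemp x) ⟨hx, hxp⟩
      rw [pairs_ext (subset_antisymm ((pairs_le_iff p q).mp hpq) hqp)]
    · obtain ⟨x, hxA, hxmin⟩ := exists_min (fun a b => Onto r a b)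
        (fun a b c h1 h2 => onto_trans' h1 h2) (fun a b h1 h2 => onto_antisymm' h h1 h2)
        (q.val.1 \ p.val.1) hne
      have hxq : x ∈ q.val.1 := hxA.1
      have hDp : jsP h x ≤ p := by
        rw [pairs_le_iff]
        rintro z ⟨hoz, hne'⟩
        by_contra hzp
        have hzq : z ∈ q.val.1 := mem_of_onto q.prop.2 hxq hoz
        exact hne' (hxmin z ⟨hzq, hzp⟩ hoz)
      have hps : g p = g (lubP p (jP r x)) := by
        rw [g_lubP g hlub, hcon x hxA, ← g_lubP g hlub, lubP_eq_left hDp]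
      have hp'q : lubP p (jP r x) ≤ q := lubP_le hpq (jP_le_iff.mpr hxq)
      have hxp' : x ∈ (lubP p (jP r x)).val.1 :=
        (pairs_le_iff _ _).mp (le_lubP_right p (jP r x)) (onto_refl' r x)
      have hpsub : p.val.1 ⊆ (lubP p (jP r x)).val.1 :=
        (pairs_le_iff _ _).mp (le_lubP_left p (jP r x))
      have hsub : q.val.1 \ (lubP p (jP r x)).val.1 ⊂ q.val.1 \ p.val.1 := by
        constructor
        · rintro z ⟨hz1, hz2⟩
          exact ⟨hz1, fun hzp => hz2 (hpsub hzp)⟩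
        · intro hsub'
          exact (hsub' ⟨hxq, hxA.2⟩).2 hxp'
      have hlt : (q.val.1 \ (lubP p (jP r x)).val.1).ncard < n := by
        rw [← hn]
        exact Set.ncard_lt_ncard hsub (Set.toFinite _)
      have hrec := ih _ hlt (lubP p (jP r x)) q rfl hp'q
        (fun z hz => hcon z ⟨hz.1, fun hzp => hz.2 (hpsub hzp)⟩)
      rw [hps, hrec]

theorem ker_iff [Finite S] (h : IsTwoAcyclicFS r ont inj) (g : Pairs r → K)
    (hlub : ∀ p q s : Pairs r, IsLUB {p, q} s → g s = g p ⊔ g q)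
    (hglb : ∀ p q s : Pairs r, IsGLB {p, q} s → g s = g p ⊓ g q)
    (p q : Pairs r) :
    g p = g q ↔ p.val.1 ∩ Vset h g = q.val.1 ∩ Vset h g := by
  constructor
  · intro hgpq
    have hmp : g (glbP p q) = g p := by
      rw [g_glbP g hglb, hgpq, inf_idem]
    have hmq : g (glbP p q) = g q := by
      rw [g_glbP g hglb, hgpq, inf_idem]
    have h1 : p.val.1 ∩ Vset h g ⊆ (glbP p q).val.1 ∩ Vset h g := by
      rintro z ⟨hzp, hzV⟩
      refine ⟨⟨hzp, ?_⟩, hzV⟩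
      by_contra hzq
      exact hzV (contracted_of_collapse h g hlub hglb (glbP_le_left p q) hmp hzp
        (fun hc => hzq hc.2))
    have h2 : q.val.1 ∩ Vset h g ⊆ (glbP p q).val.1 ∩ Vset h g := by
      rintro z ⟨hzq, hzV⟩
      refine ⟨⟨?_, hzq⟩, hzV⟩
      by_contra hzp
      exact hzV (contracted_of_collapse h g hlub hglb (glbP_le_right p q) hmq hzq
        (fun hc => hzp hc.1))
    apply subset_antisymm
    · exact h1.trans (fun z hz => ⟨hz.1.2, hz.2⟩)
    · exact h2.trans (fun z hz => ⟨hz.1.1, hz.2⟩)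
  · intro hV
    have hmV : (glbP p q).val.1 ∩ Vset h g = p.val.1 ∩ Vset h g := by
      apply subset_antisymm
      · exact fun z hz => ⟨hz.1.1, hz.2⟩
      · rintro z ⟨hzp, hzV⟩
        have hzq : z ∈ q.val.1 ∩ Vset h g := hV ▸ (⟨hzp, hzV⟩ : z ∈ p.val.1 ∩ Vset h g)
        exact ⟨⟨hzp, hzq.1⟩, hzV⟩
    have hgp : g (glbP p q) = g p :=
      collapse_of_contracted h g hlub hglb _ (glbP p q) p rfl (glbP_le_left p q)
        (fun z hz => by
          by_contra hzc
          have : z ∈ (glbP p q).val.1 ∩ Vset h g :=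
            hmV.symm ▸ (⟨hz.1, hzc⟩ : z ∈ p.val.1 ∩ Vset h g)
          exact hz.2 this.1)
    have hmV' : (glbP p q).val.1 ∩ Vset h g = q.val.1 ∩ Vset h g := hmV.trans hV
    have hgq : g (glbP p q) = g q :=
      collapse_of_contracted h g hlub hglb _ (glbP p q) q rfl (glbP_le_right p q)
        (fun z hz => by
          by_contra hzc
          have : z ∈ (glbP p q).val.1 ∩ Vset h g :=
            hmV'.symm ▸ (⟨hz.1, hzc⟩ : z ∈ q.val.1 ∩ Vset h g)
          exact hz.2 this.1)
    rw [← hgp, hgq]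

end AuxDev3

end SDL
namespace SDL

section AuxDev4

variable {S : Type*} {r ont inj : S → S → Prop}

theorem restrict_isFS [Finite S] (h : IsTwoAcyclicFS r ont inj) {U : Set S}
    (hU : ∀ x y, Forces ont inj x y → y ∈ U → x ∈ U) :
    IsTwoAcyclicFS (restrictRel r U) (restrictRel ont U) (restrictRel inj U) := by
  refine ⟨⟨fun x => h.refl ↑x, ?_, ?_, ?_⟩, ?_, ?_, ?_⟩
  · intro x y
    constructor
    · intro hxy z hz
      exact (h.onto_iff ↑x ↑y).mp hxy ↑z hz
    · intro hO
      refine (h.onto_iff _ _).mpr ?_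
      intro z hyz
      obtain ⟨w, hwU, hyw, hwz⟩ := K1 h hU y.2 hyz
      have hxw : r ↑x w := hO ⟨w, hwU⟩ (r_of_onto h hyw)
      obtain ⟨v, hxv, hvw⟩ := (r_iff_factor h ↑x w).mp hxw
      exact (r_iff_factor h ↑x z).mpr ⟨v, hxv, into_trans' hvw hwz⟩
  · intro x y
    constructor
    · intro hxy z hz
      exact (h.into_iff ↑x ↑y).mp hxy ↑z hz
    · intro hI
      refine (h.into_iff _ _).mpr ?_
      intro z hzx
      obtain ⟨w, hwU, hzw, hwx⟩ := K2 h hU x.2 hzx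
      have hwy : r w ↑y := hI ⟨w, hwU⟩ (r_of_into h hwx)
      exact hzw ↑y hwy
  · intro x z
    constructor
    · intro hxz
      obtain ⟨w, hwU, hxw, hwz⟩ := K2 h hU z.2 hxz
      exact ⟨⟨w, hwU⟩, (h.onto_iff _ _).mpr hxw, (h.into_iff _ _).mpr hwz⟩
    · rintro ⟨y, h1, h2⟩
      exact (h.mult_iff ↑x ↑z).mpr ⟨↑y, h1, h2⟩
  · intro x y h1 h2
    exact Subtype.ext (h.onto_antisymm ↑x ↑y h1 h2)
  · intro x y h1 h2
    exact Subtype.ext (h.into_antisymm ↑x ↑y h1 h2)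
  · intro x y h1 h2
    exact Subtype.ext (h.brick ↑x ↑y h1 h2)

/-- The restriction map on maximal orthogonal pairs. -/
def fmap [Finite S] (h : IsTwoAcyclicFS r ont inj) {U : Set S}
    (hU : ∀ x y, Forces ont inj x y → y ∈ U → x ∈ U) (p : Pairs r) :
    Pairs (restrictRel r U) :=
  ⟨({a : U | (a : S) ∈ p.val.1}, {a : U | (a : S) ∈ p.val.2}), by
    constructor
    · ext a
      constructor
      · intro ha b hb hba
        exact (p.prop.1 ▸ ha) ↑b hb hba
      · intro ha
        show (a : S) ∈ p.val.2
        rw [p.prop.1]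
        intro s hs hr
        obtain ⟨w, hwU, hsw, hwa⟩ := K2 h hU a.2 hr
        exact ha ⟨w, hwU⟩ (mem_of_onto p.prop.2 hs hsw) (r_of_into h hwa)
    · ext a
      constructor
      · intro ha b hb hab
        exact (p.prop.2 ▸ ha) ↑b hb hab
      · intro ha
        show (a : S) ∈ p.val.1
        rw [p.prop.2]
        intro s hs hr
        obtain ⟨w, hwU, haw, hws⟩ := K1 h hU a.2 hr
        exact ha ⟨w, hwU⟩ (mem_of_into p.prop.1 hs hws) (r_of_onto h haw)⟩

theorem fmap_surj [Finite S] (h : IsTwoAcyclicFS r ont inj) {U : Set S}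
    (hU : ∀ x y, Forces ont inj x y → y ∈ U → x ∈ U) :
    Function.Surjective (fmap h hU) := by
  intro p'
  refine ⟨⟨(perpL r {s | ∃ hs : s ∈ U, (⟨s, hs⟩ : U) ∈ p'.val.2},
      perpR r (perpL r {s | ∃ hs : s ∈ U, (⟨s, hs⟩ : U) ∈ p'.val.2})), rfl,
      (perpL_perpR_perpL r _).symm⟩, ?_⟩
  apply pairs_ext
  show {a : U | (a : S) ∈ perpL r {s | ∃ hs : s ∈ U, (⟨s, hs⟩ : U) ∈ p'.val.2}} = p'.val.1
  ext a
  constructor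
  · intro ha
    show a ∈ p'.val.1
    rw [p'.prop.2]
    intro b hb hab
    exact ha ↑b ⟨b.2, hb⟩ hab
  · intro ha
    rintro s ⟨hsU, hs2⟩ hras
    exact (p'.prop.2 ▸ ha) ⟨s, hsU⟩ hs2 hras

theorem fmap_lubP [Finite S] (h : IsTwoAcyclicFS r ont inj) {U : Set S}
    (hU : ∀ x y, Forces ont inj x y → y ∈ U → x ∈ U) (p q : Pairs r) :
    fmap h hU (lubP p q) = lubP (fmap h hU p) (fmap h hU q) :=
  pairs_ext2 (Set.ext fun _ => Iff.rfl)

theorem fmap_glbP [Finite S] (h : IsTwoAcyclicFS r ont inj) {U : Set S}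
    (hU : ∀ x y, Forces ont inj x y → y ∈ U → x ∈ U) (p q : Pairs r) :
    fmap h hU (glbP p q) = glbP (fmap h hU p) (fmap h hU q) :=
  pairs_ext (Set.ext fun _ => Iff.rfl)

theorem fmap_le_iff [Finite S] (h : IsTwoAcyclicFS r ont inj) {U : Set S}
    (hU : ∀ x y, Forces ont inj x y → y ∈ U → x ∈ U) (p q : Pairs r) :
    fmap h hU p ≤ fmap h hU q ↔ ∀ s ∈ U, s ∈ p.val.1 → s ∈ q.val.1 := by
  constructor
  · intro hle s hsU hsp
    exact @hle ⟨s, hsU⟩ hsp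
  · intro hc a ha
    exact hc ↑a a.2 ha

theorem fmap_eq_iff [Finite S] (h : IsTwoAcyclicFS r ont inj) {U : Set S}
    (hU : ∀ x y, Forces ont inj x y → y ∈ U → x ∈ U) (p q : Pairs r) :
    fmap h hU p = fmap h hU q ↔ p.val.1 ∩ U = q.val.1 ∩ U := by
  constructor
  · intro he
    have h1 : {a : U | (a : S) ∈ p.val.1} = {a : U | (a : S) ∈ q.val.1} :=
      congrArg (fun z => z.val.1) he
    ext s
    constructor
    · rintro ⟨hs1, hs2⟩
      exact ⟨(Set.ext_iff.mp h1 ⟨s, hs2⟩).mp hs1, hs2⟩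
    · rintro ⟨hs1, hs2⟩
      exact ⟨(Set.ext_iff.mp h1 ⟨s, hs2⟩).mpr hs1, hs2⟩
  · intro he
    apply pairs_ext
    ext a
    constructor
    · intro ha
      exact ((Set.ext_iff.mp he ↑a).mp ⟨ha, a.2⟩).1
    · intro ha
      exact ((Set.ext_iff.mp he ↑a).mpr ⟨ha, a.2⟩).1

end AuxDev4

end SDL

namespace SDL

/-- Theorem 1.6: for a finite two-acyclic factorization system and a `⇝`-upset `Щ`, the
restriction to `Щ` is a two-acyclic factorization system, the map
`(X,Y) ↦ (X ∩ Щ, Y ∩ Щ)` is a surjective lattice homomorphism of the lattices of maximal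
orthogonal pairs, and every lattice quotient of `Pairs(→)` arises this way for a unique
`⇝`-upset. -/
theorem finite_quotients (S : Type u) [Fintype S] (r ont inj : S → S → Prop)
    (h : IsTwoAcyclicFS r ont inj) (U : Set S)
    (hU : ∀ x y, Forces ont inj x y → y ∈ U → x ∈ U) :
    IsTwoAcyclicFS (restrictRel r U) (restrictRel ont U) (restrictRel inj U) ∧
    (∃ f : Pairs r → Pairs (restrictRel r U),
      (∀ p : Pairs r,
        (f p).val.1 = {a : U | (a : S) ∈ p.val.1} ∧
        (f p).val.2 = {a : U | (a : S) ∈ p.val.2}) ∧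
      Function.Surjective f ∧
      (∀ p q s : Pairs r, IsLUB {p, q} s → IsLUB {f p, f q} (f s)) ∧
      (∀ p q s : Pairs r, IsGLB {p, q} s → IsGLB {f p, f q} (f s))) ∧
    (∀ (K : Type v) [Lattice K], ∀ g : Pairs r → K, Function.Surjective g →
      (∀ p q s : Pairs r, IsLUB {p, q} s → g s = g p ⊔ g q) →
      (∀ p q s : Pairs r, IsGLB {p, q} s → g s = g p ⊓ g q) →
      ∃! V : Set S, (∀ x y, Forces ont inj x y → y ∈ V → x ∈ V) ∧
        ∃ e : K ≃o Pairs (restrictRel r V),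
          ∀ p : Pairs r,
            (e (g p)).val.1 = {a : V | (a : S) ∈ p.val.1} ∧
            (e (g p)).val.2 = {a : V | (a : S) ∈ p.val.2}) := by
  classical
  refine ⟨restrict_isFS h hU, ⟨fmap h hU, fun p => ⟨rfl, rfl⟩, fmap_surj h hU, ?_, ?_⟩, ?_⟩
  · intro p q s hs
    rw [isLUB_iff_lubP] at hs
    rw [hs, fmap_lubP h hU]
    exact isLUB_lubP _ _
  · intro p q s hs
    rw [isGLB_iff_glbP] at hs
    rw [hs, fmap_glbP h hU]
    exact isGLB_glbP _ _
  · intro K _inst g hgsurj hlub hglb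
    have hVup : ∀ x y, Forces ont inj x y → y ∈ Vset h g → x ∈ Vset h g :=
      Vset_upset h g hlub hglb
    have hker : ∀ p q : Pairs r, g p = g q ↔ fmap h hVup p = fmap h hVup q := fun p q =>
      (ker_iff h g hlub hglb p q).trans (fmap_eq_iff h hVup p q).symm
    have hgle : ∀ p q : Pairs r, g p ≤ g q ↔ fmap h hVup p ≤ fmap h hVup q := by
      intro p q
      rw [fmap_le_iff h hVup, ← inf_eq_left, ← g_glbP g hglb, ker_iff h g hlub hglb]
      constructor
      · intro he s hsU hsp
        have hmem : s ∈ p.val.1 ∩ Vset h g := ⟨hsp, hsU⟩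
        rw [← he] at hmem
        exact hmem.1.2
      · intro hc
        ext s
        constructor
        · rintro ⟨hs1, hs2⟩
          exact ⟨hs1.1, hs2⟩
        · rintro ⟨hs1, hs2⟩
          exact ⟨⟨hs1, hc s hs2 hs1⟩, hs2⟩
    set σ : K → Pairs r := Function.surjInv hgsurj with hσdef
    have hσ : ∀ k, g (σ k) = k := fun k => Function.surjInv_eq hgsurj k
    set ρ : Pairs (restrictRel r (Vset h g)) → Pairs r :=
      Function.surjInv (fmap_surj h hVup) with hρdef
    have hρ : ∀ p', fmap h hVup (ρ p') = p' := fun p' =>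
      Function.surjInv_eq (fmap_surj h hVup) p'
    refine ⟨Vset h g, ⟨hVup, ⟨{ toFun := fun k => fmap h hVup (σ k)
                                invFun := fun p' => g (ρ p')
                                left_inv := ?_
                                right_inv := ?_
                                map_rel_iff' := ?_ }, ?_⟩⟩, ?_⟩
    · intro k
      show g (ρ (fmap h hVup (σ k))) = k
      rw [(hker _ _).mpr (hρ _), hσ]
    · intro p'
      show fmap h hVup (σ (g (ρ p'))) = p'
      rw [(hker _ _).mp (hσ _), hρ]
    · intro a b
      show fmap h hVup (σ a) ≤ fmap h hVup (σ b) ↔ a ≤ b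
      rw [← hgle, hσ, hσ]
    · intro p
      have he : fmap h hVup (σ (g p)) = fmap h hVup p := (hker _ _).mp (hσ _)
      constructor
      · show (fmap h hVup (σ (g p))).val.1 = _
        rw [he]; rfl
      · show (fmap h hVup (σ (g p))).val.2 = _
        rw [he]; rfl
    · rintro W ⟨hWup, e'', he''⟩
      ext x
      constructor
      · intro hxW hcon
        have h4 : {a : W | (a : S) ∈ (jP r x).val.1} = {a : W | (a : S) ∈ (jsP h x).val.1} := by
          rw [← (he'' (jP r x)).1, ← (he'' (jsP h x)).1, hcon]
        have h5 := (Set.ext_iff.mp h4 ⟨x, hxW⟩).mp (onto_refl' r x)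
        exact h5.2 rfl
      · intro hxV
        by_contra hxW
        refine hxV (e''.injective (pairs_ext ?_))
        rw [(he'' _).1, (he'' _).1]
        ext a
        exact ⟨fun ha => ⟨ha, fun hax => hxW (hax ▸ a.2)⟩, fun ha => ha.1⟩

end SDL
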